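/- Let X₁, …, X_B be independent real random variables, each median-unbiased for θ in the sense that P(X_j ≥ θ) ≥ 1/2 and P(X_j ≤ θ) ≥ 1/2 for all j. Then P(min_j X_j ≤ θ ≤ max_j X_j) ≥ 1 - 2^(1-B). -/

import Mathlib

open MeasureTheory ProbabilityTheory
open scoped ENNReal

theorem stmt_2 {Ω : Type*} [MeasurableSpace Ω] (μ : Measure Ω) [IsProbabilityMeasure μ]
    (B : ℕ) (hB : 0 < B) (θ : ℝ) (X : Fin B → Ω → ℝ)
    (hmeas : ∀ j, Measurable (X j))
    (hindep : iIndepFun X μ)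
    (hge : ∀ j, (1 : ℝ≥0∞) / 2 ≤ μ {ω | θ ≤ X j ω})
    (hle : ∀ j, (1 : ℝ≥0∞) / 2 ≤ μ {ω | X j ω ≤ θ}) :
    1 - 2 ^ (1 - (B : ℤ)) ≤ μ {ω | (⨅ j, X j ω) ≤ θ ∧ θ ≤ ⨆ j, X j ω} := by
  haveI : Nonempty (Fin B) := ⟨⟨0, hB⟩⟩
  -- the two "bad" events
  set A : Set Ω := ⋂ j, X j ⁻¹' Set.Ioi θ with hA
  set C : Set Ω := ⋂ j, X j ⁻¹' Set.Iio θ with hC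
  have hmA : MeasurableSet A := MeasurableSet.iInter fun j => (hmeas j) measurableSet_Ioi
  have hmC : MeasurableSet C := MeasurableSet.iInter fun j => (hmeas j) measurableSet_Iio
  -- each coordinate bad event has probability ≤ 1/2
  have key : ∀ (j : Fin B), μ (X j ⁻¹' Set.Ioi θ) ≤ 1 / 2 := by
    intro j
    have hcompl : μ (X j ⁻¹' Set.Ioi θ) = 1 - μ {ω | X j ω ≤ θ} := by
      have : X j ⁻¹' Set.Ioi θ = {ω | X j ω ≤ θ}ᶜ := by
        ext ω; simp [not_le]
      rw [this, measure_compl (measurableSet_le (hmeas j) measurable_const) (measure_ne_top μ _),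
        measure_univ]
    rw [hcompl]
    calc 1 - μ {ω | X j ω ≤ θ} ≤ 1 - 1 / 2 := tsub_le_tsub_left (hle j) 1
    _ = 1 / 2 := by norm_num [ENNReal.sub_eq_of_eq_add]
  have key' : ∀ (j : Fin B), μ (X j ⁻¹' Set.Iio θ) ≤ 1 / 2 := by
    intro j
    have hcompl : μ (X j ⁻¹' Set.Iio θ) = 1 - μ {ω | θ ≤ X j ω} := by
      have : X j ⁻¹' Set.Iio θ = {ω | θ ≤ X j ω}ᶜ := by
        ext ω; simp [not_le]
      rw [this, measure_compl (measurableSet_le measurable_const (hmeas j)) (measure_ne_top μ _),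
        measure_univ]
    rw [hcompl]
    calc 1 - μ {ω | θ ≤ X j ω} ≤ 1 - 1 / 2 := tsub_le_tsub_left (hge j) 1
    _ = 1 / 2 := by norm_num [ENNReal.sub_eq_of_eq_add]
  have hμA : μ A ≤ (1 / 2) ^ B := by
    rw [hA, hindep.meas_iInter (fun j => ⟨Set.Ioi θ, measurableSet_Ioi, rfl⟩)]
    calc ∏ j, μ (X j ⁻¹' Set.Ioi θ) ≤ ∏ _j : Fin B, ((1:ℝ≥0∞) / 2) :=
          Finset.prod_le_prod' fun j _ => key j
    _ = (1 / 2) ^ B := by simp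
  have hμC : μ C ≤ (1 / 2) ^ B := by
    rw [hC, hindep.meas_iInter (fun j => ⟨Set.Iio θ, measurableSet_Iio, rfl⟩)]
    calc ∏ j, μ (X j ⁻¹' Set.Iio θ) ≤ ∏ _j : Fin B, ((1:ℝ≥0∞) / 2) :=
          Finset.prod_le_prod' fun j _ => key' j
    _ = (1 / 2) ^ B := by simp
  -- complement of the good event is contained in A ∪ C
  have hsub : {ω | (⨅ j, X j ω) ≤ θ ∧ θ ≤ ⨆ j, X j ω}ᶜ ⊆ A ∪ C := by
    intro ω hω
    simp only [Set.mem_compl_iff, Set.mem_setOf_eq, not_and_or, not_le] at hω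
    rcases hω with h | h
    · left
      refine Set.mem_iInter.2 fun j => ?_
      exact lt_of_lt_of_le h (ciInf_le (Set.Finite.bddBelow (Set.finite_range _)) j)
    · right
      refine Set.mem_iInter.2 fun j => ?_
      exact lt_of_le_of_lt (le_ciSup (Set.Finite.bddAbove (Set.finite_range _)) j) h
  have hbound : μ {ω | (⨅ j, X j ω) ≤ θ ∧ θ ≤ ⨆ j, X j ω}ᶜ ≤ 2 ^ (1 - (B : ℤ)) := by
    calc μ {ω | (⨅ j, X j ω) ≤ θ ∧ θ ≤ ⨆ j, X j ω}ᶜ ≤ μ (A ∪ C) := measure_mono hsub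
    _ ≤ μ A + μ C := measure_union_le _ _
    _ ≤ (1 / 2) ^ B + (1 / 2) ^ B := add_le_add hμA hμC
    _ = 2 ^ (1 - (B : ℤ)) := by
        rw [ENNReal.zpow_sub (by norm_num) (by norm_num)]
        simp [one_div, ENNReal.inv_pow, zpow_natCast, div_eq_mul_inv, two_mul, pow_one]
  calc 1 - 2 ^ (1 - (B : ℤ)) ≤ 1 - μ {ω | (⨅ j, X j ω) ≤ θ ∧ θ ≤ ⨆ j, X j ω}ᶜ :=
        tsub_le_tsub_left hbound 1
  _ = μ {ω | (⨅ j, X j ω) ≤ θ ∧ θ ≤ ⨆ j, X j ω} := by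
      have hm : MeasurableSet {ω | (⨅ j, X j ω) ≤ θ ∧ θ ≤ ⨆ j, X j ω} :=
        (measurableSet_le (Measurable.iInf fun j => hmeas j) measurable_const).inter
          (measurableSet_le measurable_const (Measurable.iSup fun j => hmeas j))
      rw [measure_compl hm (measure_ne_top μ _), measure_univ,
        ENNReal.sub_sub_cancel ENNReal.one_ne_top prob_le_one]
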